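/- Comparative statics without differentiability: under the additional substitution assumption (for fixed v₂ ≤ 0 and q₁ < q₁' in (0,1): M(v₂,q₁) ≤ 0 implies M(v₂,q₁') < 0) together with the single-crossing assumption, if v₁ < v₁' with both types having interior maximizers q₁*, q₁*' ∈ (0,1) of Π(·,v₁) and Π(·,v₁') respectively, then q₁* < q₁*' strictly (any selection of maximizers is strictly increasing). -/
import Mathlib


open MeasureTheory Set

/-- Comparative statics without differentiability: under the substitution
assumption and the single-crossing assumption, any interior maximizers of
`Π(·,v₁)` and `Π(·,v₁')` with `v₁ < v₁'` satisfy `q₁* < q₁*'`. -/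
theorem stmt12 (F Fq ξ : ℝ → ℝ → ℝ) (ψ : ℝ → ℝ)
    (hξ : ∀ v q, ξ v q = -F v q + (1 - q) * Fq v q)
    (hψ : StrictMono ψ)
    (hrot : ∀ q ∈ Ioo (0:ℝ) 1, ∀ v : ℝ, 0 < v → ξ v q < 0)
    (hSC : ∀ q ∈ Ioo (0:ℝ) 1, ∀ v v' : ℝ, ξ v q ≤ 0 → v < v' → ξ v' q < 0)
    (hsub : ∀ v : ℝ, v ≤ 0 → ∀ q ∈ Ioo (0:ℝ) 1, ∀ q' ∈ Ioo (0:ℝ) 1,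
      q < q' → ξ v q ≤ 0 → ξ v q' < 0)
    (Pr : ℝ → ℝ → ℝ)
    (hPr : ∀ q v, Pr q v = ψ v + (1 - q) * ∫ v₂ in Iic (-ψ v), F v₂ q)
    (hderiv : ∀ v : ℝ, ∀ q ∈ Ioo (0:ℝ) 1,
      HasDerivAt (fun q' => Pr q' v) (∫ v₂ in Iic (-ψ v), ξ v₂ q) q)
    (hIntξ : ∀ v : ℝ, ∀ q ∈ Ioo (0:ℝ) 1,
      IntegrableOn (fun v₂ => ξ v₂ q) (Iic (-ψ v)) volume)
    (v₁ v₁' q₁ q₁' : ℝ) (hv : v₁ < v₁')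
    (hq₁ : q₁ ∈ Ioo (0:ℝ) 1) (hq₁' : q₁' ∈ Ioo (0:ℝ) 1)
    (hmax : IsMaxOn (fun q => Pr q v₁) (Icc 0 1) q₁)
    (hmax' : IsMaxOn (fun q => Pr q v₁') (Icc 0 1) q₁') :
    q₁ < q₁' := by

  have hba : -ψ v₁' < -ψ v₁ := neg_lt_neg (hψ hv)
  set a := -ψ v₁ with ha
  set b := -ψ v₁' with hb
  -- first-order conditions
  have key : ∀ v q, q ∈ Ioo (0:ℝ) 1 → IsMaxOn (fun q' => Pr q' v) (Icc 0 1) q →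
      (∫ v₂ in Iic (-ψ v), ξ v₂ q) = 0 := by
    intro v q hq hm
    have hnh : Icc (0:ℝ) 1 ∈ nhds q := Icc_mem_nhds hq.1 hq.2
    exact (hm.isLocalMax hnh).hasDerivAt_eq_zero (hderiv v q hq)
  have hI' : (∫ v₂ in Iic b, ξ v₂ q₁') = 0 := key v₁' q₁' hq₁' hmax'
  -- find a point v₀ ≤ b where ξ(·, q₁') ≤ 0
  obtain ⟨v₀, hv₀b, hv₀ξ⟩ : ∃ v₀ ≤ b, ξ v₀ q₁' ≤ 0 := by
    by_contra h
    push_neg at h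
    have hpos : 0 < ∫ v₂ in Iic b, ξ v₂ q₁' := by
      rw [setIntegral_pos_iff_support_of_nonneg_ae]
      · have : Function.support (fun v₂ => ξ v₂ q₁') ∩ Iic b = Iic b := by
          apply inter_eq_self_of_subset_right
          intro x hx
          exact (ne_of_gt (h x hx))
        rw [this, Real.volume_Iic]
        exact ENNReal.zero_lt_top
      · filter_upwards [ae_restrict_mem measurableSet_Iic] with x hx
        exact (h x hx).le
      · exact (hIntξ v₁' q₁' hq₁')
    rw [hI'] at hpos
    exact lt_irrefl 0 hpos
  -- splitting of the integral
  have hsplit : ∀ q ∈ Ioo (0:ℝ) 1, (∫ v₂ in Iic a, ξ v₂ q)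
      = (∫ v₂ in Iic b, ξ v₂ q) + ∫ v₂ in Ioc b a, ξ v₂ q := by
    intro q hq
    rw [← setIntegral_union (Iic_disjoint_Ioc le_rfl) measurableSet_Ioc
        ((hIntξ v₁ q hq).mono_set (Iic_subset_Iic.mpr hba.le))
        ((hIntξ v₁ q hq).mono_set Ioc_subset_Iic_self),
      Iic_union_Ioc_eq_Iic hba.le]
  -- negativity of the tail integral
  have hJneg : ∀ q ∈ Ioo (0:ℝ) 1, ξ v₀ q ≤ 0 → (∫ v₂ in Ioc b a, ξ v₂ q) < 0 := by
    intro q hq h0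
    have hneg : ∀ v₂ ∈ Ioc b a, ξ v₂ q < 0 := fun v₂ hv₂ =>
      hSC q hq v₀ v₂ h0 (lt_of_le_of_lt hv₀b hv₂.1)
    have hpos : 0 < ∫ v₂ in Ioc b a, -ξ v₂ q := by
      rw [setIntegral_pos_iff_support_of_nonneg_ae]
      · have : Function.support (fun v₂ => -ξ v₂ q) ∩ Ioc b a = Ioc b a := by
          apply inter_eq_self_of_subset_right
          intro x hx
          simpa using (ne_of_lt (hneg x hx))
        rw [this, Real.volume_Ioc]
        simp [hba]
      · filter_upwards [ae_restrict_mem measurableSet_Ioc] with x hx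
        simpa using (hneg x hx).le
      · exact ((hIntξ v₁ q hq).mono_set Ioc_subset_Iic_self).neg
    rw [integral_neg] at hpos
    linarith
  rcases lt_trichotomy q₁ q₁' with h | h | h
  · exact h
  · -- q₁ = q₁' : contradiction
    exfalso
    subst h
    have hI : (∫ v₂ in Iic a, ξ v₂ q₁) = 0 := key v₁ q₁ hq₁ hmax
    have := hsplit q₁ hq₁
    rw [hI, hI'] at this
    have := hJneg q₁ hq₁ hv₀ξ
    linarith
  · -- q₁' < q₁ : contradiction
    exfalso
    have hξ₀ : ∀ q ∈ Ioo (0:ℝ) 1, q₁' < q → ξ v₀ q < 0 := by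
      intro q hq hlt
      rcases le_or_gt v₀ 0 with h0 | h0
      · exact hsub v₀ h0 q₁' hq₁' q hq hlt hv₀ξ
      · exact hrot q hq v₀ h0
    set g : ℝ → ℝ := fun q => Pr q v₁ - Pr q v₁' with hg
    have hgd : ∀ q ∈ Ioo (0:ℝ) 1, HasDerivAt g (∫ v₂ in Ioc b a, ξ v₂ q) q := by
      intro q hq
      have hd := (hderiv v₁ q hq).sub (hderiv v₁' q hq)
      have e : (∫ v₂ in Iic a, ξ v₂ q) - (∫ v₂ in Iic b, ξ v₂ q)
          = ∫ v₂ in Ioc b a, ξ v₂ q := by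
        rw [hsplit q hq]; ring
      rwa [e] at hd
    have hmem : ∀ x ∈ Icc q₁' q₁, x ∈ Ioo (0:ℝ) 1 := fun x hx =>
      ⟨lt_of_lt_of_le hq₁'.1 hx.1, lt_of_le_of_lt hx.2 hq₁.2⟩
    have hanti : StrictAntiOn g (Icc q₁' q₁) := by
      apply strictAntiOn_of_deriv_neg (convex_Icc _ _)
      · exact fun x hx => ((hgd x (hmem x hx)).continuousAt).continuousWithinAt
      · intro x hx
        rw [interior_Icc] at hx
        have hq : x ∈ Ioo (0:ℝ) 1 := ⟨lt_trans hq₁'.1 hx.1, lt_trans hx.2 hq₁.2⟩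
        rw [(hgd x hq).deriv]
        exact hJneg x hq (hξ₀ x hq hx.1).le
    have hlt := hanti (left_mem_Icc.mpr h.le) (right_mem_Icc.mpr h.le) h
    have h1 : Pr q₁' v₁ ≤ Pr q₁ v₁ := hmax ⟨hq₁'.1.le, hq₁'.2.le⟩
    have h2 : Pr q₁ v₁' ≤ Pr q₁' v₁' := hmax' ⟨hq₁.1.le, hq₁.2.le⟩
    simp only [hg] at hlt
    linarith
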